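/- Let T ≥ 2 and N ≥ 2. The set of pairs (x, Y) ∈ ℝ^N × ℝ^{T×N}, with x = (x₁, …, x_N) and Y = [y₁, …, y_N], such that either the entries x₁, …, x_N are not pairwise distinct, or (after reindexing so that x₁ < x₂ < ⋯ < x_N) there exists i ∈ {2, …, N−2} for which the vectors s_i − s_{i−1} and s_{i+1} − s_i are both nonzero and aligned, has Lebesgue measure zero in ℝ^N × ℝ^{T×N}. -/

import Mathlib

/-!
Shallow univariate (input dimension 1) ReLU networks with `T` outputs,
width `K`, input weights `w k ∈ {−1, +1}`, and a residual connection.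
-/

open scoped BigOperators
open Finset

noncomputable section

/-- Parameters of a width-`K`, `T`-output shallow ReLU network with residual
connection, whose input weights are constrained to `{−1, +1}`. -/
structure ReLUParams (T K : ℕ) where
  v : Fin K → EuclideanSpace ℝ (Fin T)
  w : Fin K → ℝ
  b : Fin K → ℝ
  A : EuclideanSpace ℝ (Fin T)
  c : EuclideanSpace ℝ (Fin T)
  hw : ∀ k, w k = 1 ∨ w k = -1

/-- The network function `f_θ(x) = ∑ₖ vₖ (wₖ x + bₖ)₊ + A x + c`. -/
def nnFun {T K : ℕ} (θ : ReLUParams T K) (x : ℝ) : EuclideanSpace ℝ (Fin T) :=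
  (∑ k : Fin K, max (θ.w k * x + θ.b k) 0 • θ.v k) + x • θ.A + θ.c

/-- The objective of problem (P): `∑ₖ ‖vₖ‖₂`. -/
def cost {T K : ℕ} (θ : ReLUParams T K) : ℝ := ∑ k : Fin K, ‖θ.v k‖

/-- Slope vector `sᵢ = (y_{i+1} − yᵢ)/(x_{i+1} − xᵢ)` (0-indexed). -/
def slopeVec {T : ℕ} (x : ℕ → ℝ) (y : ℕ → EuclideanSpace ℝ (Fin T)) (i : ℕ) :
    EuclideanSpace ℝ (Fin T) :=
  (x (i + 1) - x i)⁻¹ • (y (i + 1) - y i)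

/-- The connect-the-dots interpolant `f_D` of the data
`(x 0, y 0), …, (x (N-1), y (N-1))` (0-indexed): it interpolates the data, is
affine on each interval `[xᵢ, x_{i+1}]`, is affine with slopeVec `s 0` on
`(−∞, x 0]` and affine with slopeVec `s (N-2)` on `[x (N-1), ∞)`. -/
def ctd {T : ℕ} (N : ℕ) (x : ℕ → ℝ) (y : ℕ → EuclideanSpace ℝ (Fin T)) (t : ℝ) :
    EuclideanSpace ℝ (Fin T) :=
  y 0 + (t - x 0) • slopeVec x y 0 +
    ∑ i ∈ Finset.Ico 1 (N - 1), max (t - x i) 0 • (slopeVec x y i - slopeVec x y (i - 1))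

/-- Feasibility for problem (P): the network interpolates the data. -/
def Interpolates {T K : ℕ} (N : ℕ) (x : ℕ → ℝ) (y : ℕ → EuclideanSpace ℝ (Fin T))
    (θ : ReLUParams T K) : Prop :=
  ∀ i < N, nnFun θ (x i) = y i

/-- `θ` attains the minimum of problem (P). -/
def IsMinimizer {T K : ℕ} (N : ℕ) (x : ℕ → ℝ) (y : ℕ → EuclideanSpace ℝ (Fin T))
    (θ : ReLUParams T K) : Prop :=
  Interpolates N x y θ ∧ ∀ θ' : ReLUParams T K, Interpolates N x y θ' → cost θ ≤ cost θ'

/-- Two vectors `u₁, u₂ ∈ ℝ^T` are aligned if `⟪u₁, u₂⟫ = ‖u₁‖₂ ‖u₂‖₂`. -/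
def Aligned {T : ℕ} (u₁ u₂ : EuclideanSpace ℝ (Fin T)) : Prop :=
  (inner ℝ u₁ u₂ : ℝ) = ‖u₁‖ * ‖u₂‖

/-- Extend a `Fin N`-indexed family of reals to `ℕ` (by zero). -/
def extR (N : ℕ) (x : Fin N → ℝ) : ℕ → ℝ :=
  fun n => if h : n < N then x ⟨n, h⟩ else 0

/-- Extend a `Fin N`-indexed family of vectors to `ℕ` (by zero). -/
def extV {T : ℕ} (N : ℕ) (y : Fin N → EuclideanSpace ℝ (Fin T)) :
    ℕ → EuclideanSpace ℝ (Fin T) :=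
  fun n => if h : n < N then y ⟨n, h⟩ else 0

section AuxLemmas

open MeasureTheory

instance piEuclideanHaar (T N : ℕ) :
    (volume : Measure (Fin N → EuclideanSpace ℝ (Fin T))).IsAddHaarMeasure :=
  Measure.pi.isAddHaarMeasure _

instance prodEuclideanHaar (T : ℕ) :
    (volume : Measure (EuclideanSpace ℝ (Fin T) × EuclideanSpace ℝ (Fin T))).IsAddHaarMeasure :=
  Measure.prod.instIsAddHaarMeasure _ _

instance omegaHaar (T N : ℕ) :
    (volume : Measure ((Fin N → ℝ) × (Fin N → EuclideanSpace ℝ (Fin T)))).IsAddHaarMeasure :=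
  Measure.prod.instIsAddHaarMeasure _ _

lemma measurableSet_aligned_pair (T : ℕ) :
    MeasurableSet {q : EuclideanSpace ℝ (Fin T) × EuclideanSpace ℝ (Fin T) |
      q.1 ≠ 0 ∧ q.2 ≠ 0 ∧ Aligned q.1 q.2} := by
  apply MeasurableSet.inter
  · exact (isClosed_singleton.preimage continuous_fst).measurableSet.compl
  apply MeasurableSet.inter
  · exact (isClosed_singleton.preimage continuous_snd).measurableSet.compl
  · exact (isClosed_eq continuous_inner (by fun_prop)).measurableSet

lemma aligned_pair_null (T : ℕ) (hT : 2 ≤ T) :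
    volume {q : EuclideanSpace ℝ (Fin T) × EuclideanSpace ℝ (Fin T) |
      q.1 ≠ 0 ∧ q.2 ≠ 0 ∧ Aligned q.1 q.2} = 0 := by
  have hmeas := measurableSet_aligned_pair T
  rw [Measure.volume_eq_prod, Measure.measure_prod_null hmeas]
  filter_upwards with u
  rcases eq_or_ne u 0 with hu | hu
  · have : (Prod.mk u ⁻¹' {q : EuclideanSpace ℝ (Fin T) × EuclideanSpace ℝ (Fin T) |
        q.1 ≠ 0 ∧ q.2 ≠ 0 ∧ Aligned q.1 q.2}) = ∅ := by
      ext v; simp [hu]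
    rw [this]; exact measure_empty
  · apply measure_mono_null
      (t := ((Submodule.span ℝ {u} : Submodule ℝ (EuclideanSpace ℝ (Fin T))) : Set _))
    · rintro v ⟨-, hv, hal⟩
      have h := inner_eq_norm_mul_iff_real.mp hal
      have hnu : ‖u‖ ≠ 0 := norm_ne_zero_iff.mpr hu
      simp only at h hv
      have : v = (‖u‖⁻¹ * ‖v‖) • u := by
        rw [mul_smul, h, inv_smul_smul₀ hnu]
      exact Submodule.mem_span_singleton.mpr ⟨_, this.symm⟩
    · apply Measure.addHaar_submodule
      intro htop
      have h1 : Module.finrank ℝ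
          (Submodule.span ℝ ({u} : Set (EuclideanSpace ℝ (Fin T)))) = 1 :=
        finrank_span_singleton hu
      rw [htop, finrank_top, finrank_euclideanSpace_fin] at h1
      omega

lemma slice_null (T N : ℕ) (hT : 2 ≤ T) (j : ℕ) (hj : j + 4 ≤ N)
    (σ : Equiv.Perm (Fin N)) (x : Fin N → ℝ) (hx : StrictMono (x ∘ σ)) :
    volume {Y : Fin N → EuclideanSpace ℝ (Fin T) |
      slopeVec (extR N (x ∘ σ)) (extV N (Y ∘ σ)) (j + 1)
          - slopeVec (extR N (x ∘ σ)) (extV N (Y ∘ σ)) j ≠ 0 ∧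
        slopeVec (extR N (x ∘ σ)) (extV N (Y ∘ σ)) (j + 2)
          - slopeVec (extR N (x ∘ σ)) (extV N (Y ∘ σ)) (j + 1) ≠ 0 ∧
        Aligned
          (slopeVec (extR N (x ∘ σ)) (extV N (Y ∘ σ)) (j + 1)
            - slopeVec (extR N (x ∘ σ)) (extV N (Y ∘ σ)) j)
          (slopeVec (extR N (x ∘ σ)) (extV N (Y ∘ σ)) (j + 2)
            - slopeVec (extR N (x ∘ σ)) (extV N (Y ∘ σ)) (j + 1))} = 0 := by
  set E := EuclideanSpace ℝ (Fin T)
  have h0 : j < N := by omega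
  have h1 : j + 1 < N := by omega
  have h2 : j + 2 < N := by omega
  have h3 : j + 3 < N := by omega
  set a0 : Fin N := σ ⟨j, h0⟩
  set a1 : Fin N := σ ⟨j + 1, h1⟩
  set a2 : Fin N := σ ⟨j + 2, h2⟩
  set a3 : Fin N := σ ⟨j + 3, h3⟩
  set d0 : ℝ := x a1 - x a0 with hd0def
  set d1 : ℝ := x a2 - x a1 with hd1def
  set d2 : ℝ := x a3 - x a2 with hd2def
  have hd0 : d0 ≠ 0 := by
    have := hx (show (⟨j, h0⟩ : Fin N) < ⟨j + 1, h1⟩ by simp)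
    simp only [Function.comp_apply] at this
    simp only [hd0def]; intro h; rw [sub_eq_zero] at h; exact absurd h.symm (ne_of_lt this)
  have hd1 : d1 ≠ 0 := by
    have := hx (show (⟨j + 1, h1⟩ : Fin N) < ⟨j + 2, h2⟩ by simp)
    simp only [Function.comp_apply] at this
    simp only [hd1def]; intro h; rw [sub_eq_zero] at h; exact absurd h.symm (ne_of_lt this)
  have hd2 : d2 ≠ 0 := by
    have := hx (show (⟨j + 2, h2⟩ : Fin N) < ⟨j + 3, h3⟩ by simp)
    simp only [Function.comp_apply] at this
    simp only [hd2def]; intro h; rw [sub_eq_zero] at h; exact absurd h.symm (ne_of_lt this)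
  set L : (Fin N → E) →ₗ[ℝ] E × E :=
    LinearMap.prod
      (d1⁻¹ • ((LinearMap.proj a2 : (Fin N → E) →ₗ[ℝ] E) - (LinearMap.proj a1 : (Fin N → E) →ₗ[ℝ] E))
        - d0⁻¹ • ((LinearMap.proj a1 : (Fin N → E) →ₗ[ℝ] E) - (LinearMap.proj a0 : (Fin N → E) →ₗ[ℝ] E)))
      (d2⁻¹ • ((LinearMap.proj a3 : (Fin N → E) →ₗ[ℝ] E) - (LinearMap.proj a2 : (Fin N → E) →ₗ[ℝ] E))
        - d1⁻¹ • ((LinearMap.proj a2 : (Fin N → E) →ₗ[ℝ] E) - (LinearMap.proj a1 : (Fin N → E) →ₗ[ℝ] E))) with hL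
  have hLapp : ∀ Y : Fin N → E,
      L Y = (d1⁻¹ • (Y a2 - Y a1) - d0⁻¹ • (Y a1 - Y a0),
             d2⁻¹ • (Y a3 - Y a2) - d1⁻¹ • (Y a2 - Y a1)) := by
    intro Y
    simp [hL, smul_sub]
  have hslope : ∀ Y : Fin N → E,
      (slopeVec (extR N (x ∘ σ)) (extV N (Y ∘ σ)) (j + 1)
          - slopeVec (extR N (x ∘ σ)) (extV N (Y ∘ σ)) j,
       slopeVec (extR N (x ∘ σ)) (extV N (Y ∘ σ)) (j + 2)
          - slopeVec (extR N (x ∘ σ)) (extV N (Y ∘ σ)) (j + 1)) = L Y := by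
    intro Y
    rw [hLapp]
    simp only [slopeVec, extR, extV, Prod.mk.injEq]
    rw [dif_pos h0, dif_pos h1, dif_pos h2, dif_pos h3,
        dif_pos h0, dif_pos h1, dif_pos h2, dif_pos h3]
    constructor <;> rfl
  have hsurj : Function.Surjective L := by
    intro e
    have hinj := σ.injective
    have ha01 : a0 ≠ a1 := fun h => by
      have := hinj h; simp only [Fin.mk.injEq] at this; omega
    have ha02 : a0 ≠ a2 := fun h => by
      have := hinj h; simp only [Fin.mk.injEq] at this; omega
    have ha03 : a0 ≠ a3 := fun h => by
      have := hinj h; simp only [Fin.mk.injEq] at this; omega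
    have ha13 : a1 ≠ a3 := fun h => by
      have := hinj h; simp only [Fin.mk.injEq] at this; omega
    have ha23 : a2 ≠ a3 := fun h => by
      have := hinj h; simp only [Fin.mk.injEq] at this; omega
    refine ⟨fun m => if m = a0 then d0 • e.1 else if m = a3 then d2 • e.2 else 0, ?_⟩
    rw [hLapp]
    simp only [if_pos rfl, if_neg ha01.symm, if_neg ha02.symm, if_neg ha03.symm,
      if_neg ha13, if_neg ha23]
    ext1
    · simp [smul_smul, inv_mul_cancel₀ hd0]
    · simp [smul_smul, inv_mul_cancel₀ hd2]
  have hA := aligned_pair_null T hT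
  have hAmeas := measurableSet_aligned_pair T
  have key : (∀ᵐ Y : Fin N → E, L Y ∈ {q : E × E | q.1 ≠ 0 ∧ q.2 ≠ 0 ∧ Aligned q.1 q.2}ᶜ) := by
    rw [MeasureTheory.ae_comp_linearMap_mem_iff L volume volume hsurj hAmeas.compl]
    rw [MeasureTheory.ae_iff]
    simpa using hA
  rw [MeasureTheory.ae_iff] at key
  refine measure_mono_null ?_ key
  intro Y hY
  simp only [Set.mem_setOf_eq, Set.mem_compl_iff, not_not]
  show (L Y).1 ≠ 0 ∧ (L Y).2 ≠ 0 ∧ Aligned (L Y).1 (L Y).2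
  rw [← hslope Y] at *
  exact hY

end AuxLemmas


/-- The set of data configurations
`(x, Y) ∈ ℝ^N × ℝ^{T×N}` such that either the `xᵢ` are not pairwise distinct,
or, after reindexing so that `x₁ < ⋯ < x_N`, for some (1-indexed)
`i ∈ {2, …, N−2}` the vectors `sᵢ − s_{i−1}` and `s_{i+1} − sᵢ` are both nonzero
and aligned, has Lebesgue measure zero. -/
theorem bad_datasets_measure_zero (T N : ℕ) (hT : 2 ≤ T) (hN : 2 ≤ N) :
    MeasureTheory.volume
      {p : (Fin N → ℝ) × (Fin N → EuclideanSpace ℝ (Fin T)) |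
        (¬ Function.Injective p.1) ∨
        ∃ σ : Equiv.Perm (Fin N), StrictMono (p.1 ∘ σ) ∧
          ∃ i : ℕ, 1 ≤ i ∧ i + 3 ≤ N ∧
            slopeVec (extR N (p.1 ∘ σ)) (extV N (p.2 ∘ σ)) i
              - slopeVec (extR N (p.1 ∘ σ)) (extV N (p.2 ∘ σ)) (i - 1) ≠ 0 ∧
            slopeVec (extR N (p.1 ∘ σ)) (extV N (p.2 ∘ σ)) (i + 1)
              - slopeVec (extR N (p.1 ∘ σ)) (extV N (p.2 ∘ σ)) i ≠ 0 ∧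
            Aligned
              (slopeVec (extR N (p.1 ∘ σ)) (extV N (p.2 ∘ σ)) i
                - slopeVec (extR N (p.1 ∘ σ)) (extV N (p.2 ∘ σ)) (i - 1))
              (slopeVec (extR N (p.1 ∘ σ)) (extV N (p.2 ∘ σ)) (i + 1)
                - slopeVec (extR N (p.1 ∘ σ)) (extV N (p.2 ∘ σ)) i)} = 0 := by
  classical
  set E := EuclideanSpace ℝ (Fin T) with hE
  set Ω := (Fin N → ℝ) × (Fin N → E) with hΩ
  -- the covering sets
  set S : Fin N → Fin N → Set Ω := fun a b => {p : Ω | a ≠ b ∧ p.1 a = p.1 b} with hS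
  set B : Equiv.Perm (Fin N) → ℕ → Set Ω := fun σ j =>
    {p : Ω | j + 4 ≤ N ∧ StrictMono (p.1 ∘ σ) ∧
      slopeVec (extR N (p.1 ∘ σ)) (extV N (p.2 ∘ σ)) (j + 1)
          - slopeVec (extR N (p.1 ∘ σ)) (extV N (p.2 ∘ σ)) j ≠ 0 ∧
      slopeVec (extR N (p.1 ∘ σ)) (extV N (p.2 ∘ σ)) (j + 2)
          - slopeVec (extR N (p.1 ∘ σ)) (extV N (p.2 ∘ σ)) (j + 1) ≠ 0 ∧
      Aligned
        (slopeVec (extR N (p.1 ∘ σ)) (extV N (p.2 ∘ σ)) (j + 1)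
          - slopeVec (extR N (p.1 ∘ σ)) (extV N (p.2 ∘ σ)) j)
        (slopeVec (extR N (p.1 ∘ σ)) (extV N (p.2 ∘ σ)) (j + 2)
          - slopeVec (extR N (p.1 ∘ σ)) (extV N (p.2 ∘ σ)) (j + 1))} with hB
  apply MeasureTheory.measure_mono_null
    (t := (⋃ (a : Fin N), ⋃ (b : Fin N), S a b) ∪
      ⋃ (σ : Equiv.Perm (Fin N)), ⋃ (j : ℕ), B σ j)
  · -- containment
    rintro p (hp | ⟨σ, hmono, i, hi1, hi3, hu, hv, hal⟩)
    · obtain ⟨a, b, hab, hne⟩ := Function.not_injective_iff.mp hp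
      exact Or.inl (Set.mem_iUnion.mpr ⟨a, Set.mem_iUnion.mpr ⟨b, ⟨hne, hab⟩⟩⟩)
    · obtain ⟨j, rfl⟩ : ∃ j, i = j + 1 := ⟨i - 1, by omega⟩
      refine Or.inr (Set.mem_iUnion.mpr ⟨σ, Set.mem_iUnion.mpr ⟨j, ?_⟩⟩)
      simp only [Nat.add_sub_cancel] at hu hal
      exact ⟨by omega, hmono, hu, hv, hal⟩
  apply MeasureTheory.measure_union_null
  · -- non-injective part
    apply MeasureTheory.measure_iUnion_null
    intro a
    apply MeasureTheory.measure_iUnion_null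
    intro b
    by_cases hab : a = b
    · have : S a b = ∅ := by ext p; simp [hS, hab]
      rw [this]; exact MeasureTheory.measure_empty
    · set φ : Ω →ₗ[ℝ] ℝ :=
        ((LinearMap.proj a : (Fin N → ℝ) →ₗ[ℝ] ℝ)
          - (LinearMap.proj b : (Fin N → ℝ) →ₗ[ℝ] ℝ)).comp
          (LinearMap.fst ℝ (Fin N → ℝ) (Fin N → E)) with hφ
      apply MeasureTheory.measure_mono_null
        (t := ((LinearMap.ker φ : Submodule ℝ Ω) : Set Ω))
      · rintro p ⟨-, hp⟩
        simp only [SetLike.mem_coe, LinearMap.mem_ker, hφ, LinearMap.comp_apply,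
          LinearMap.sub_apply, LinearMap.proj_apply, LinearMap.fst_apply]
        rw [sub_eq_zero]; exact hp
      · apply MeasureTheory.Measure.addHaar_submodule
        intro htop
        have hz : φ = 0 := LinearMap.ker_eq_top.mp htop
        have h1 : φ ((fun m => if m = a then (1:ℝ) else 0), 0) = 0 := by rw [hz]; rfl
        have h2 : φ ((fun m => if m = a then (1:ℝ) else 0), 0)
            = (if a = a then (1:ℝ) else 0) - (if b = a then (1:ℝ) else 0) := rfl
        rw [h1, if_pos rfl, if_neg (Ne.symm hab), sub_zero] at h2
        exact one_ne_zero h2.symm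
  · -- aligned part
    apply MeasureTheory.measure_iUnion_null
    intro σ
    apply MeasureTheory.measure_iUnion_null
    intro j
    rcases Nat.lt_or_ge N (j + 4) with hj' | hj
    · have hempty : B σ j = ∅ := by
        ext p
        simp only [hB, Set.mem_setOf_eq, Set.mem_empty_iff_false, iff_false]
        intro h
        omega
      rw [hempty]
      exact MeasureTheory.measure_empty
    -- measurability of B σ j
    have h0 : j < N := by omega
    have h1 : j + 1 < N := by omega
    have h2 : j + 2 < N := by omega
    have h3 : j + 3 < N := by omega
    have hslopemeas : ∀ k : ℕ, k + 1 < N → Measurable (fun p : Ω =>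
        slopeVec (extR N (p.1 ∘ σ)) (extV N (p.2 ∘ σ)) k) := by
      intro k hk
      have hk' : k < N := by omega
      have hfun : (fun p : Ω => slopeVec (extR N (p.1 ∘ σ)) (extV N (p.2 ∘ σ)) k)
          = fun p : Ω => (p.1 (σ ⟨k + 1, hk⟩) - p.1 (σ ⟨k, hk'⟩))⁻¹
              • (p.2 (σ ⟨k + 1, hk⟩) - p.2 (σ ⟨k, hk'⟩)) := by
        funext p
        simp only [slopeVec, extR, extV]
        rw [dif_pos hk, dif_pos hk', dif_pos hk, dif_pos hk']
        rfl
      rw [hfun]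
      refine Measurable.smul (f := fun p : Ω => (p.1 (σ ⟨k + 1, hk⟩) - p.1 (σ ⟨k, hk'⟩))⁻¹)
        (g := fun p : Ω => p.2 (σ ⟨k + 1, hk⟩) - p.2 (σ ⟨k, hk'⟩)) ?_ ?_
      · exact (((measurable_pi_apply (σ ⟨k + 1, hk⟩)).comp measurable_fst).sub
          ((measurable_pi_apply (σ ⟨k, hk'⟩)).comp measurable_fst)).inv
      · exact ((measurable_pi_apply (σ ⟨k + 1, hk⟩)).comp measurable_snd).sub
          ((measurable_pi_apply (σ ⟨k, hk'⟩)).comp measurable_snd)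
    have hu : Measurable (fun p : Ω =>
        slopeVec (extR N (p.1 ∘ σ)) (extV N (p.2 ∘ σ)) (j + 1)
          - slopeVec (extR N (p.1 ∘ σ)) (extV N (p.2 ∘ σ)) j) :=
      (hslopemeas (j + 1) h2).sub (hslopemeas j h1)
    have hv : Measurable (fun p : Ω =>
        slopeVec (extR N (p.1 ∘ σ)) (extV N (p.2 ∘ σ)) (j + 2)
          - slopeVec (extR N (p.1 ∘ σ)) (extV N (p.2 ∘ σ)) (j + 1)) :=
      (hslopemeas (j + 2) h3).sub (hslopemeas (j + 1) h2)
    have hmono : MeasurableSet {p : Ω | StrictMono (p.1 ∘ σ)} := by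
      have : {p : Ω | StrictMono (p.1 ∘ σ)}
          = ⋂ (a : Fin N), ⋂ (b : Fin N), ⋂ (_ : a < b),
            {p : Ω | p.1 (σ a) < p.1 (σ b)} := by
        ext p
        simp only [Set.mem_setOf_eq, Set.mem_iInter]
        constructor
        · intro h a b hab; exact h hab
        · intro h a b hab; exact h a b hab
      rw [this]
      exact MeasurableSet.iInter fun a => MeasurableSet.iInter fun b =>
        MeasurableSet.iInter fun hab => measurableSet_lt ((measurable_pi_apply _).comp measurable_fst)
          ((measurable_pi_apply _).comp measurable_fst)
    have hBmeas : MeasurableSet (B σ j) := by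
      have : B σ j = {p : Ω | StrictMono (p.1 ∘ σ)}
          ∩ ((fun p : Ω => slopeVec (extR N (p.1 ∘ σ)) (extV N (p.2 ∘ σ)) (j + 1)
              - slopeVec (extR N (p.1 ∘ σ)) (extV N (p.2 ∘ σ)) j) ⁻¹' {0})ᶜ
          ∩ ((fun p : Ω => slopeVec (extR N (p.1 ∘ σ)) (extV N (p.2 ∘ σ)) (j + 2)
              - slopeVec (extR N (p.1 ∘ σ)) (extV N (p.2 ∘ σ)) (j + 1)) ⁻¹' {0})ᶜ
          ∩ {p : Ω | (inner ℝ
              (slopeVec (extR N (p.1 ∘ σ)) (extV N (p.2 ∘ σ)) (j + 1)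
                - slopeVec (extR N (p.1 ∘ σ)) (extV N (p.2 ∘ σ)) j)
              (slopeVec (extR N (p.1 ∘ σ)) (extV N (p.2 ∘ σ)) (j + 2)
                - slopeVec (extR N (p.1 ∘ σ)) (extV N (p.2 ∘ σ)) (j + 1)) : ℝ)
            = ‖slopeVec (extR N (p.1 ∘ σ)) (extV N (p.2 ∘ σ)) (j + 1)
                - slopeVec (extR N (p.1 ∘ σ)) (extV N (p.2 ∘ σ)) j‖
              * ‖slopeVec (extR N (p.1 ∘ σ)) (extV N (p.2 ∘ σ)) (j + 2)
                - slopeVec (extR N (p.1 ∘ σ)) (extV N (p.2 ∘ σ)) (j + 1)‖} := by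
        ext p
        simp only [hB, Set.mem_setOf_eq, Set.mem_inter_iff, Set.mem_compl_iff,
          Set.mem_preimage, Set.mem_singleton_iff, Aligned]
        tauto
      rw [this]
      refine (((hmono.inter ?_).inter ?_).inter ?_)
      · exact (hu (measurableSet_singleton 0)).compl
      · exact (hv (measurableSet_singleton 0)).compl
      · exact measurableSet_eq_fun (hu.inner hv) (hu.norm.mul hv.norm)
    -- Fubini
    rw [MeasureTheory.Measure.volume_eq_prod, MeasureTheory.Measure.measure_prod_null hBmeas]
    filter_upwards with x
    by_cases hx : StrictMono (x ∘ σ)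
    · refine MeasureTheory.measure_mono_null ?_ (slice_null T N hT j hj σ x hx)
      intro Y hY
      exact ⟨hY.2.2.1, hY.2.2.2.1, hY.2.2.2.2⟩
    · have : (Prod.mk x ⁻¹' B σ j) = ∅ :=
        Set.eq_empty_of_forall_notMem fun Y hY => hx hY.2.1
      rw [this]; exact MeasureTheory.measure_empty


end
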